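/- Let (η_n), (ζ_n) be non-increasing sequences of positive reals, C > 1, and (ζ_{n,m}) non-decreasing in m with limit ζ_n, satisfying both recursive inequalities η_n η_{m+1}/(η_{m+1}+Cζ_{n,m}) ≤ η_{n+m} ≤ η_n η_{m+1}/(η_{m+1}+C^{-1}ζ_{n,m}) for all n,m ≥ 1. If η_n/ζ_n is bounded from above (over all n), then η_n → 0 as n → ∞. -/

import Mathlib

theorem stmt5 (η ζ : ℕ → ℝ) (ζ' : ℕ → ℕ → ℝ) (C : ℝ)
    (hC : 1 < C)
    (hηpos : ∀ n, 1 ≤ n → 0 < η n)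
    (hζpos : ∀ n, 1 ≤ n → 0 < ζ n)
    (hηmono : ∀ n m, 1 ≤ n → n ≤ m → η m ≤ η n)
    (hζmono : ∀ n m, 1 ≤ n → n ≤ m → ζ m ≤ ζ n)
    (hζ'mono : ∀ n m₁ m₂, 1 ≤ n → 1 ≤ m₁ → m₁ ≤ m₂ → ζ' n m₁ ≤ ζ' n m₂)
    (hζlim : ∀ n, 1 ≤ n →
      Filter.Tendsto (fun m => ζ' n m) Filter.atTop (nhds (ζ n)))
    (hrecLow : ∀ n m, 1 ≤ n → 1 ≤ m →
      η n * η (m + 1) / (η (m + 1) + C * ζ' n m) ≤ η (n + m))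
    (hrecUp : ∀ n m, 1 ≤ n → 1 ≤ m →
      η (n + m) ≤ η n * η (m + 1) / (η (m + 1) + C⁻¹ * ζ' n m))
    (hbdd : ∃ M : ℝ, ∀ n, 1 ≤ n → η n / ζ n ≤ M) :
    Filter.Tendsto η Filter.atTop (nhds 0) := by
  have hC0 : (0:ℝ) < C := lt_trans one_pos hC
  have hCinv : (0:ℝ) < C⁻¹ := inv_pos.mpr hC0
  have hfanti : Antitone (fun n => η (n+1)) :=
    antitone_nat_of_succ_le fun n => hηmono (n+1) (n+1+1) (by omega) (by omega)
  have hganti : Antitone (fun n => ζ (n+1)) :=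
    antitone_nat_of_succ_le fun n => hζmono (n+1) (n+1+1) (by omega) (by omega)
  have hfbdd : BddBelow (Set.range (fun n => η (n+1))) := by
    refine ⟨0, ?_⟩
    rintro x ⟨n, rfl⟩
    exact (hηpos (n+1) (by omega)).le
  have hgbdd : BddBelow (Set.range (fun n => ζ (n+1))) := by
    refine ⟨0, ?_⟩
    rintro x ⟨n, rfl⟩
    exact (hζpos (n+1) (by omega)).le
  set a : ℝ := ⨅ n, η (n+1) with ha_def
  set b : ℝ := ⨅ n, ζ (n+1) with hb_def
  have hftend : Filter.Tendsto (fun n => η (n+1)) Filter.atTop (nhds a) :=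
    tendsto_atTop_ciInf hfanti hfbdd
  have hgtend : Filter.Tendsto (fun n => ζ (n+1)) Filter.atTop (nhds b) :=
    tendsto_atTop_ciInf hganti hgbdd
  have hηtend : Filter.Tendsto η Filter.atTop (nhds a) :=
    (Filter.tendsto_add_atTop_iff_nat 1).mp hftend
  have ha0le : 0 ≤ a := le_ciInf fun n => (hηpos (n+1) (by omega)).le
  have ha0 : a = 0 := by
    by_contra h
    have ha : 0 < a := lt_of_le_of_ne ha0le (Ne.symm h)
    obtain ⟨M, hM⟩ := hbdd
    have hMpos : 0 < M :=
      lt_of_lt_of_le (div_pos (hηpos 1 le_rfl) (hζpos 1 le_rfl)) (hM 1 le_rfl)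
    have hb : 0 < b := by
      have : a / M ≤ b := by
        refine le_ciInf fun n => ?_
        have h1 : η (n+1) / ζ (n+1) ≤ M := hM (n+1) (by omega)
        have h2 : ζ (n+1) > 0 := hζpos (n+1) (by omega)
        have h3 : a ≤ η (n+1) := ciInf_le hfbdd n
        rw [div_le_iff₀ h2] at h1
        rw [div_le_iff₀ hMpos]
        linarith
      linarith [div_pos ha hMpos]
    have key : ∀ n, 1 ≤ n → a + C⁻¹ * ζ n ≤ η n := by
      intro n hn
      have hζn : 0 < ζ n := hζpos n hn
      have hden : 0 < a + C⁻¹ * ζ n := by positivity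
      have hL : Filter.Tendsto (fun m => η (n + m)) Filter.atTop (nhds a) := by
        have := hηtend.comp (Filter.tendsto_add_atTop_nat n)
        simpa [Function.comp_def, add_comm] using this
      have hR : Filter.Tendsto
          (fun m => η n * η (m+1) / (η (m+1) + C⁻¹ * ζ' n m)) Filter.atTop
          (nhds (η n * a / (a + C⁻¹ * ζ n))) := by
        exact (tendsto_const_nhds.mul hftend).div
          (hftend.add (tendsto_const_nhds.mul (hζlim n hn))) hden.ne'
      have hle : a ≤ η n * a / (a + C⁻¹ * ζ n) :=
        le_of_tendsto_of_tendsto hL hR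
          (Filter.eventually_atTop.2 ⟨1, fun m hm => hrecUp n m hn hm⟩)
      rw [le_div_iff₀ hden] at hle
      nlinarith
    have final : a + C⁻¹ * b ≤ a := by
      refine le_of_tendsto_of_tendsto'
        (tendsto_const_nhds.add (tendsto_const_nhds.mul hgtend)) hftend
        (fun n => key (n+1) (by omega))
    nlinarith
  rw [ha0] at hηtend
  exact hηtend
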